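/- Every n-expansion Lie algebra (L_•, ψ) satisfies dim_{F2} L_• ≤ n·2^{n−1} − 2^n + n + 1 (in particular L_• is finite-dimensional), and L_m = 0 for every m > n. -/

import Mathlib

abbrev F2 := ZMod 2

namespace HigherGenus

abbrev V (ι : Type) := ι → F2

abbrev ML (ι : Type) (i : ℕ) := MultilinearMap F2 (fun _ : Fin i => V ι) F2

variable {ι : Type} [Fintype ι] [DecidableEq ι]

/-- The tensor product of a family of linear functionals, as a multilinear map. -/
noncomputable def funcTensor {i : ℕ} (L : Fin i → (V ι →ₗ[F2] F2)) : ML ι i :=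
  (MultilinearMap.mkPiAlgebra F2 (Fin i) F2).compLinearMap L

/-- `χ_{h 1} ⊗ ⋯ ⊗ χ_{h i}` as a multilinear map. -/
noncomputable def chiTensor (i : ℕ) (h : Fin i → ι) : ML ι i :=
  funcTensor (fun p => LinearMap.proj (h p))

/-- The governing tensor `φ_{(A,x)}`: the sum of `χ_{τ(1)}⊗⋯⊗χ_{τ(i)}` over all bijections
`τ : [i] ≃ A` placing `x` in one of the last two positions. -/
noncomputable def govTensor (i : ℕ) (A : Finset ι) (x : ι) : ML ι i :=
  ∑ τ : Fin i ≃ {a // a ∈ A},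
    if ∀ p : Fin i, ((τ p : ι) = x → i ≤ (p : ℕ) + 2) then
      chiTensor i (fun p => (τ p : ι)) else 0

/-- `Gov(V_B, i)`: the span of the governing tensors supported in `B`. -/
noncomputable def Gov (i : ℕ) (B : Finset ι) : Submodule F2 (ML ι i) :=
  Submodule.span F2
    {φ | ∃ A : Finset ι, ∃ x : ι, A ⊆ B ∧ A.card = i ∧ x ∈ A ∧ φ = govTensor i A x}

/-- `Multi~(V_B, i)`: the span of the injective pure tensors supported in `B`. -/
noncomputable def MultiT (i : ℕ) (B : Finset ι) : Submodule F2 (ML ι i) :=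
  Submodule.span F2
    {φ | ∃ τ : Fin i → ι, Function.Injective τ ∧ (∀ p, τ p ∈ B) ∧ φ = chiTensor i τ}

/-- Evaluation of a multilinear map at a fixed tuple, as a linear map. -/
def mEval {i : ℕ} (σ : Fin i → V ι) : ML ι i →ₗ[F2] F2 where
  toFun b := b σ
  map_add' _ _ := rfl
  map_smul' _ _ := rfl

/-- Plugging the vector `v` into the first slot of a multilinear map. -/
noncomputable def consMapL {i : ℕ} (v : V ι) : ML ι (i + 1) →ₗ[F2] ML ι i :=
  (LinearMap.applyₗ v).comp
    (multilinearCurryLeftEquiv F2 (fun _ : Fin (i + 1) => V ι) F2).toLinearMap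

/-- The standard basis vector `e_j`. -/
def stdb (j : ι) : V ι := Pi.single j 1

/-- The recursively defined subspaces `Cons(V_B, i)`. -/
noncomputable def Cons : (i : ℕ) → Finset ι → Submodule F2 (ML ι i)
  | 0, _ => ⊥
  | 1, B => Gov 1 B
  | 2, B => MultiT 2 B ⊓
      (⨅ σ : Fin 2 → V ι, LinearMap.ker (mEval σ - mEval (σ ∘ (Equiv.swap 0 1))))
  | 3, B => (MultiT 3 B ⊓
      (⨅ j ∈ B, Submodule.comap (consMapL (stdb j)) (Cons 2 (B.erase j)))) ⊓
      (⨅ j₁ : ι, ⨅ j₂ : ι, ⨅ j₃ : ι,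
        LinearMap.ker (mEval ![stdb j₁, stdb j₂, stdb j₃]
          + mEval ![stdb j₃, stdb j₁, stdb j₂] + mEval ![stdb j₂, stdb j₃, stdb j₁]))
  | (i+4), B => (MultiT (i+4) B ⊓
      (⨅ j ∈ B, Submodule.comap (consMapL (stdb j)) (Cons (i+3) (B.erase j)))) ⊓
      (⨅ j₁ : ι, ⨅ j₂ : ι, ⨅ _ : j₁ ≠ j₂,
        LinearMap.ker ((consMapL (stdb j₂)).comp (consMapL (stdb j₁))
          - (consMapL (stdb j₁)).comp (consMapL (stdb j₂))))


/-- The right-nested bracket `[σ_1,[σ_2,[…,[σ_{i−1},σ_i]…]]]`. -/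
def nest {L : Type} [AddCommGroup L] [Module F2 L]
    (br : L →ₗ[F2] L →ₗ[F2] L) : {i : ℕ} → (Fin i → L) → L
  | 0, _ => 0
  | 1, σ => σ 0
  | (_+2), σ => br (σ 0) (nest br (Fin.tail σ))

/-- `(L_•, ψ)` (presented by a bracket `br`, graded pieces `piece m` for `m ≥ 1` with
`piece 0 = ⊥`, and `ψ`) is an expansion Lie algebra over the index set `ι`. -/
structure IsExpLie {ι : Type} [Fintype ι] [DecidableEq ι] {L : Type}
    [AddCommGroup L] [Module F2 L]
    (br : L →ₗ[F2] L →ₗ[F2] L) (piece : ℕ → Submodule F2 L)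
    (ψ : L →ₗ[F2] V ι) : Prop where
  /-- the grading starts in degree 1 -/
  piece_zero : piece 0 = ⊥
  /-- the graded pieces are independent … -/
  indep : iSupIndep piece
  /-- … and give a direct sum decomposition of `L` -/
  span_top : (⨆ m, piece m) = ⊤
  /-- `[L_h, L_k] ⊆ L_{h+k}` -/
  graded : ∀ h k : ℕ, ∀ x ∈ piece h, ∀ y ∈ piece k, br x y ∈ piece (h + k)
  /-- the bracket is alternating -/
  br_self : ∀ x, br x x = 0
  /-- the Jacobi identity -/
  jacobi : ∀ x y z, br x (br y z) + br y (br z x) + br z (br x y) = 0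
  /-- `ψ` is surjective -/
  psi_surj : Function.Surjective ψ
  /-- `ψ` is a homomorphism of graded Lie algebras: it kills brackets
  (the target has the zero bracket) … -/
  psi_br : ∀ x y, ψ (br x y) = 0
  /-- … and it kills every graded piece of degree `≠ 1`
  (the target is concentrated in degree 1) -/
  psi_graded : ∀ m : ℕ, m ≠ 1 → ∀ x ∈ piece m, ψ x = 0
  /-- `ker ψ` is an abelian subalgebra -/
  ker_abelian : ∀ x y, ψ x = 0 → ψ y = 0 → br x y = 0
  /-- `[L_•, L_•] = ker ψ` -/
  comm_eq_ker : Submodule.span F2 {z | ∃ x y, z = br x y} = LinearMap.ker ψ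
  /-- for `i ≥ 4`, nested brackets with entries in `L_1` are unchanged under any permutation
  of the first `i − 2` entries -/
  perm_invariant : ∀ (m : ℕ) (σ : Fin (m + 4) → L), (∀ p, σ p ∈ piece 1) →
    ∀ e : Equiv.Perm (Fin (m + 4)), (∀ p : Fin (m + 4), m + 2 ≤ (p : ℕ) → e p = p) →
    nest br (σ ∘ e) = nest br σ
  /-- for `i ≥ 4`, nested brackets with entries in `L_1` vanish as soon as two of the first
  `i − 2` entries coincide -/
  repeat_vanish : ∀ (m : ℕ) (σ : Fin (m + 4) → L), (∀ p, σ p ∈ piece 1) →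
    (∃ s t : Fin (m + 4), s ≠ t ∧ (s : ℕ) < m + 2 ∧ (t : ℕ) < m + 2 ∧ σ s = σ t) →
    nest br σ = 0
  /-- `[τ_1,[τ_1,τ_2]] = 0` for `τ_1, τ_2 ∈ L_1` with `ψ(τ_1)` a standard basis vector -/
  basis_bracket_sq : ∀ x y : L, x ∈ piece 1 → y ∈ piece 1 →
    (∃ j : ι, ψ x = stdb j) → br x (br x y) = 0

/-- A bundled expansion Lie algebra over the index set `ι`. -/
structure ExpLieAlg (ι : Type) [Fintype ι] [DecidableEq ι] where
  L : Type
  [acg : AddCommGroup L]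
  [mod : Module F2 L]
  br : L →ₗ[F2] L →ₗ[F2] L
  piece : ℕ → Submodule F2 L
  psi : L →ₗ[F2] V ι
  isexp : IsExpLie br piece psi

attribute [instance] ExpLieAlg.acg ExpLieAlg.mod

/-- A homomorphism of expansion Lie algebras: a linear map commuting with the brackets,
preserving the gradings, and compatible with the structure maps `ψ`. -/
def IsExpLieHom {ι : Type} [Fintype ι] [DecidableEq ι] (E E' : ExpLieAlg ι)
    (f : E.L →ₗ[F2] E'.L) : Prop :=
  (∀ x y, f (E.br x y) = E'.br (f x) (f y)) ∧
  (∀ m : ℕ, ∀ x ∈ E.piece m, f x ∈ E'.piece m) ∧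
  (∀ x, E'.psi (f x) = E.psi x)

section ProofAux

variable {n : ℕ} {L : Type} [AddCommGroup L] [Module F2 L]

lemma add_self_zero (z : L) : z + z = 0 := by
  have : ((2 : F2)) • z = z + z := two_smul F2 z
  rw [show (2 : F2) = 0 by decide, zero_smul] at this
  exact this.symm

lemma eq_of_add_eq_zero' {a b : L} (h : a + b = 0) : a = b := by
  have := congrArg (· + b) h
  simpa [add_assoc, add_self_zero] using this

lemma tail_snoc {α : Type} {k : ℕ} (f : Fin (k+1) → α) (a : α) :
    Fin.tail (Fin.snoc f a : Fin (k+2) → α) = (Fin.snoc (Fin.tail f) a : Fin (k+1) → α) := by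
  funext p
  induction p using Fin.lastCases with
  | last =>
      show (Fin.snoc f a : Fin (k+2) → α) (Fin.last k).succ = _
      rw [Fin.succ_last, Fin.snoc_last, Fin.snoc_last]
  | cast q =>
      show (Fin.snoc f a : Fin (k+2) → α) (q.castSucc).succ = _
      rw [Fin.succ_castSucc, Fin.snoc_castSucc, Fin.snoc_castSucc]
      rfl

variable (br : L →ₗ[F2] L →ₗ[F2] L)

lemma nest_one (σ : Fin 1 → L) : nest br σ = σ 0 := rfl

lemma nest_succ {k : ℕ} (σ : Fin (k+2) → L) :
    nest br σ = br (σ 0) (nest br (Fin.tail σ)) := rfl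

/-- Prefix-nesting: `nestC br f v = [f 0, [f 1, …, [f (k-1), v]…]]`. -/
def nestC : {k : ℕ} → (Fin k → L) → L → L
  | 0, _, v => v
  | _+1, f, v => br (f 0) (nestC (Fin.tail f) v)

@[simp] lemma nestC_zero_tuple (f : Fin 0 → L) (v : L) : nestC br f v = v := rfl

lemma nestC_succ {k : ℕ} (f : Fin (k+1) → L) (v : L) :
    nestC br f v = br (f 0) (nestC br (Fin.tail f) v) := rfl

lemma nestC_zero : ∀ {k : ℕ} (f : Fin k → L), nestC br f 0 = 0
  | 0, _ => rfl
  | k+1, f => by rw [nestC_succ, nestC_zero (Fin.tail f), map_zero]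

lemma nestC_add : ∀ {k : ℕ} (f : Fin k → L) (u v : L),
    nestC br f (u + v) = nestC br f u + nestC br f v
  | 0, _, _, _ => rfl
  | k+1, f, u, v => by
      rw [nestC_succ, nestC_succ, nestC_succ, nestC_add (Fin.tail f) u v, map_add]

lemma nestC_snoc : ∀ {k : ℕ} (f : Fin k → L) (a : L) (v : L),
    nestC br (Fin.snoc f a) v = nestC br f (br a v)
  | 0, f, a, v => by
      rw [nestC_succ]
      have h0 : (Fin.snoc f a : Fin 1 → L) 0 = a := by simp [Fin.snoc]
      rw [h0]
      rfl
  | k+1, f, a, v => by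
      have h0 : (Fin.snoc f a : Fin (k+2) → L) 0 = f 0 := by
        show (Fin.snoc f a : Fin (k+2) → L) (Fin.castSucc 0) = f 0
        rw [Fin.snoc_castSucc]
      rw [nestC_succ, tail_snoc, nestC_snoc (Fin.tail f) a v, nestC_succ, h0]

lemma nest_eq_nestC : ∀ {k : ℕ} (σ : Fin (k+1) → L),
    nest br σ = nestC br (Fin.init σ) (σ (Fin.last k))
  | 0, σ => rfl
  | k+1, σ => by
      rw [nest_succ, nest_eq_nestC (Fin.tail σ)]
      rfl

lemma nest_snoc2 {k : ℕ} (f : Fin k → L) (y z : L) :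
    nest br (Fin.snoc (Fin.snoc f y) z : Fin (k+2) → L) = nestC br f (br y z) := by
  rw [nest_eq_nestC, Fin.init_snoc, Fin.snoc_last, nestC_snoc]

lemma nest_snoc3 {k : ℕ} (f : Fin k → L) (x y z : L) :
    nest br (Fin.snoc (Fin.snoc (Fin.snoc f x) y) z : Fin (k+3) → L)
      = nestC br f (br x (br y z)) := by
  rw [nest_snoc2, nestC_snoc]

lemma nest_cons {k : ℕ} (a : L) (σ : Fin (k+1) → L) :
    nest br (Fin.cons a σ : Fin (k+2) → L) = br a (nest br σ) := by
  rw [nest_succ, Fin.cons_zero, Fin.tail_cons]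

lemma nestC_cast {k k' : ℕ} (h : k = k') (f : Fin k' → L) (v : L) :
    nestC br (f ∘ Fin.cast h) v = nestC br f v := by
  subst h; rfl

end ProofAux
section ExpProof

variable {n : ℕ} {L : Type} [AddCommGroup L] [Module F2 L]
  {br : L →ₗ[F2] L →ₗ[F2] L} {piece : ℕ → Submodule F2 L} {ψ : L →ₗ[F2] V (Fin n)}

variable (hE : IsExpLie br piece ψ)
include hE

lemma br_symm (x y : L) : br x y = br y x := by
  have h := hE.br_self (x + y)
  simp only [map_add, LinearMap.add_apply, hE.br_self x, hE.br_self y,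
    zero_add, add_zero] at h
  exact (eq_of_add_eq_zero' h).symm

lemma jacobi' (x y z : L) : br x (br y z) = br y (br x z) + br z (br x y) := by
  have h := hE.jacobi x y z
  rw [br_symm hE z x] at h
  have h2 : br x (br y z) + (br y (br x z) + br z (br x y)) = 0 := by
    rw [← add_assoc]; exact h
  exact eq_of_add_eq_zero' h2

lemma br_mem_iSup2 (x y : L) : br x y ∈ ⨆ m, piece (m + 2) := by
  have hx : x ∈ ⨆ m, piece m := by rw [hE.span_top]; exact Submodule.mem_top
  refine Submodule.iSup_induction (motive := fun a => ∀ b, br a b ∈ ⨆ m, piece (m + 2))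
    piece hx ?_ ?_ ?_ y
  · intro h a ha b
    have hb : b ∈ ⨆ m, piece m := by rw [hE.span_top]; exact Submodule.mem_top
    refine Submodule.iSup_induction (motive := fun b => br a b ∈ ⨆ m, piece (m + 2))
      piece hb ?_ ?_ ?_
    · intro k b hbk
      rcases Nat.eq_zero_or_pos h with h0 | hpos
      · subst h0; rw [hE.piece_zero] at ha
        rw [(Submodule.mem_bot F2).mp ha]; simp
      rcases Nat.eq_zero_or_pos k with k0 | kpos
      · subst k0; rw [hE.piece_zero] at hbk
        rw [(Submodule.mem_bot F2).mp hbk]; simp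
      have hm : br a b ∈ piece (h + k) := hE.graded h k a ha b hbk
      have hhk : h + k = (h + k - 2) + 2 := by omega
      rw [hhk] at hm
      exact Submodule.mem_iSup_of_mem (h + k - 2) hm
    · simp
    · intro u v hu hv; rw [map_add]; exact add_mem hu hv
  · intro b; simp
  · intro u v hu hv b
    rw [map_add, LinearMap.add_apply]; exact add_mem (hu b) (hv b)

lemma ker_le_iSup2 : LinearMap.ker ψ ≤ ⨆ m, piece (m + 2) := by
  rw [← hE.comm_eq_ker]
  refine Submodule.span_le.mpr ?_
  rintro z ⟨a, b, rfl⟩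
  exact br_mem_iSup2 hE a b

lemma disj_piece1 : Disjoint (piece 1) (⨆ m, piece (m + 2)) := by
  refine Disjoint.mono_right ?_ (hE.indep 1)
  exact iSup_le fun m => le_iSup₂ (f := fun (j : ℕ) (_ : j ≠ 1) => piece j) (m + 2) (by omega)

lemma psi1_bij : Function.Bijective (ψ.comp (piece 1).subtype) := by
  constructor
  · intro a b hab
    apply Subtype.ext
    have h1 : (a : L) - (b : L) ∈ piece 1 := sub_mem a.2 b.2
    have h2 : ψ ((a : L) - (b : L)) = 0 := by
      rw [map_sub]; rw [show ψ (a : L) = ψ (b : L) from hab]; simp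
    have h3 : (a : L) - (b : L) ∈ ⨆ m, piece (m + 2) :=
      ker_le_iSup2 hE (LinearMap.mem_ker.mpr h2)
    have := Submodule.disjoint_def.mp (disj_piece1 hE) _ h1 h3
    exact sub_eq_zero.mp this
  · intro v
    have htop : (⊤ : Submodule F2 (V (Fin n))) ≤ Submodule.map ψ (piece 1) := by
      have h1 : (⊤ : Submodule F2 (V (Fin n))) = Submodule.map ψ ⊤ := by
        rw [Submodule.map_top, LinearMap.range_eq_top.mpr hE.psi_surj]
      rw [h1, ← hE.span_top, Submodule.map_iSup]
      refine iSup_le fun m => ?_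
      rcases eq_or_ne m 1 with rfl | hm
      · exact le_rfl
      · intro w hw
        rcases Submodule.mem_map.mp hw with ⟨u, hu, rfl⟩
        rw [hE.psi_graded m hm u hu]
        exact Submodule.zero_mem _
    rcases Submodule.mem_map.mp (htop Submodule.mem_top) with ⟨u, hu, hq⟩
    exact ⟨⟨u, hu⟩, hq⟩

/-- The canonical lift of the standard basis vectors to `L₁`. -/
noncomputable def Bv : Fin n → L :=
  fun j => ((LinearEquiv.ofBijective (ψ.comp (piece 1).subtype) (psi1_bij hE)).symm (stdb j) : L)

lemma Bv_mem (j : Fin n) : Bv hE j ∈ piece 1 :=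
  ((LinearEquiv.ofBijective (ψ.comp (piece 1).subtype) (psi1_bij hE)).symm (stdb j)).2

lemma psi_Bv (j : Fin n) : ψ (Bv hE j) = stdb j := by
  have := (LinearEquiv.ofBijective (ψ.comp (piece 1).subtype)
      (psi1_bij hE)).apply_symm_apply (stdb j)
  exact this

lemma piece1_le_spanB : piece 1 ≤ Submodule.span F2 (Set.range (Bv hE)) := by
  intro x hx
  set e := LinearEquiv.ofBijective (ψ.comp (piece 1).subtype) (psi1_bij hE) with he
  set f : V (Fin n) →ₗ[F2] L := (piece 1).subtype.comp (e.symm : V (Fin n) →ₗ[F2] piece 1) with hf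
  have hxf : x = f (ψ x) := by
    have h1 : e ⟨x, hx⟩ = ψ x := rfl
    have h2 : e.symm (ψ x) = ⟨x, hx⟩ := by rw [← h1, e.symm_apply_apply]
    show x = ((e.symm (ψ x) : piece 1) : L)
    rw [h2]
  have hstdb : (stdb : Fin n → V (Fin n)) = ⇑(Pi.basisFun F2 (Fin n)) := by
    funext j; rw [Pi.basisFun_apply]; rfl
  have hv : ψ x ∈ Submodule.span F2 (Set.range (stdb : Fin n → V (Fin n))) := by
    rw [hstdb, (Pi.basisFun F2 (Fin n)).span_eq]; exact Submodule.mem_top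
  have hmem : f (ψ x) ∈ Submodule.map f (Submodule.span F2 (Set.range stdb)) :=
    Submodule.mem_map_of_mem hv
  rw [Submodule.map_span] at hmem
  rw [hxf]
  refine Submodule.span_mono ?_ hmem
  rintro _ ⟨v, ⟨j, rfl⟩, rfl⟩
  exact ⟨j, rfl⟩

lemma nest_mem_piece : ∀ (m : ℕ) (σ : Fin (m+1) → L), (∀ p, σ p ∈ piece 1) →
    nest br σ ∈ piece (m+1)
  | 0, σ, hσ => hσ 0
  | m+1, σ, hσ => by
    rw [nest_succ]
    have h1 := hE.graded 1 (m+1) (σ 0) (hσ 0) (nest br (Fin.tail σ))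
      (nest_mem_piece m (Fin.tail σ) (fun p => hσ p.succ))
    have h2 : 1 + (m + 1) = m + 2 := by omega
    rwa [h2] at h1

/-- Projection property of an independent grading. -/
lemma mem_piece_component {q : ℕ → Submodule F2 L} (hq : ∀ d, q d ≤ piece d) {m : ℕ} {x : L}
    (hx : x ∈ piece m) (hx2 : x ∈ ⨆ d, q d) : x ∈ q m := by
  have hle : (⨆ d, q d) ≤ q m ⊔ (⨆ (j) (_ : j ≠ m), piece j) := by
    refine iSup_le fun d => ?_
    rcases eq_or_ne d m with rfl | hd
    · exact le_sup_left
    · exact le_trans (hq d)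
        (le_trans (le_iSup₂ (f := fun (j : ℕ) (_ : j ≠ m) => piece j) d hd) le_sup_right)
  rcases Submodule.mem_sup.mp (hle hx2) with ⟨u, hu, w, hw, huw⟩
  have hxu : x - u ∈ piece m := sub_mem hx (hq m hu)
  have hxw : x - u = w := by rw [← huw]; abel
  have h0 : x - u = 0 :=
    Submodule.disjoint_def.mp (hE.indep m) _ hxu (hxw ▸ hw)
  have : x = u := by rw [sub_eq_zero] at h0; exact h0
  rw [this]; exact hu

omit hE in
lemma br_mem_span_pair {S T : Set L} {u v : L} (hu : u ∈ Submodule.span F2 S)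
    (hv : v ∈ Submodule.span F2 T) :
    br u v ∈ Submodule.span F2 {w | ∃ s ∈ S, ∃ t ∈ T, w = br s t} := by
  induction hu using Submodule.span_induction with
  | mem s hs =>
    induction hv using Submodule.span_induction with
    | mem t ht => exact Submodule.subset_span ⟨s, hs, t, ht, rfl⟩
    | zero => rw [map_zero]; exact Submodule.zero_mem _
    | add a b _ _ ha hb => rw [map_add]; exact add_mem ha hb
    | smul c a _ ha => rw [map_smul]; exact Submodule.smul_mem _ c ha
  | zero => rw [map_zero, LinearMap.zero_apply]; exact Submodule.zero_mem _
  | add a b _ _ ha hb => rw [map_add, LinearMap.add_apply]; exact add_mem ha hb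
  | smul c a _ ha => rw [map_smul, LinearMap.smul_apply]; exact Submodule.smul_mem _ c ha

/-- The span of all nested brackets of length `m` with entries among the canonical lifts. -/
noncomputable def Nm (m : ℕ) : Submodule F2 L :=
  Submodule.span F2 {v | ∃ j : Fin m → Fin n, v = nest br (Bv hE ∘ j)}

lemma Nm_le_piece : ∀ m : ℕ, 1 ≤ m → Nm hE m ≤ piece m := by
  intro m hm
  refine Submodule.span_le.mpr ?_
  rintro v ⟨j, rfl⟩
  obtain ⟨m', rfl⟩ : ∃ m', m = m' + 1 := ⟨m - 1, by omega⟩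
  exact nest_mem_piece hE m' _ (fun p => Bv_mem hE (j p))

/-- Brackets of graded elements, by degree. -/
def Rm (d : ℕ) : Submodule F2 L :=
  Submodule.span F2 {w | ∃ h k u v, h + k = d ∧ u ∈ piece h ∧ v ∈ piece k ∧ w = br u v}

lemma Rm_le_piece (d : ℕ) : Rm (br := br) (piece := piece) d ≤ piece d := by
  refine Submodule.span_le.mpr ?_
  rintro w ⟨h, k, u, v, hhk, hu, hv, rfl⟩
  rw [← hhk]
  exact hE.graded h k u hu v hv

lemma br_mem_iSupR (x y : L) : br x y ∈ ⨆ d, Rm (br := br) (piece := piece) d := by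
  have hx : x ∈ ⨆ m, piece m := by rw [hE.span_top]; exact Submodule.mem_top
  refine Submodule.iSup_induction (motive := fun a => ∀ b, br a b ∈ ⨆ d, Rm (br := br) (piece := piece) d)
    piece hx ?_ ?_ ?_ y
  · intro h a ha b
    have hb : b ∈ ⨆ m, piece m := by rw [hE.span_top]; exact Submodule.mem_top
    refine Submodule.iSup_induction
      (motive := fun b => br a b ∈ ⨆ d, Rm (br := br) (piece := piece) d) piece hb ?_ ?_ ?_
    · intro k b hbk
      exact Submodule.mem_iSup_of_mem (h + k)
        (Submodule.subset_span ⟨h, k, a, b, rfl, ha, hbk, rfl⟩)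
    · simp
    · intro u v hu hv; rw [map_add]; exact add_mem hu hv
  · intro b; simp
  · intro u v hu hv b
    rw [map_add, LinearMap.add_apply]; exact add_mem (hu b) (hv b)

lemma piece_le_Nm : ∀ m : ℕ, piece m ≤ Nm hE m := by
  intro m
  induction m using Nat.strong_induction_on with
  | _ m IH =>
  match m with
  | 0 => rw [hE.piece_zero]; exact bot_le
  | 1 =>
    refine le_trans (piece1_le_spanB hE) (Submodule.span_mono ?_)
    rintro _ ⟨j, rfl⟩
    exact ⟨fun _ => j, rfl⟩
  | (k+2) =>
    have hRN : Rm (br := br) (piece := piece) (k+2) ≤ Nm hE (k+2) := by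
      refine Submodule.span_le.mpr ?_
      rintro w ⟨h, k', u, v, hhk, hu, hv, rfl⟩
      rcases Nat.eq_zero_or_pos h with h0 | hpos
      · subst h0; rw [hE.piece_zero] at hu
        rw [(Submodule.mem_bot F2).mp hu, map_zero, LinearMap.zero_apply]
        exact Submodule.zero_mem _
      rcases Nat.eq_zero_or_pos k' with k0 | kpos
      · subst k0; rw [hE.piece_zero] at hv
        rw [(Submodule.mem_bot F2).mp hv, map_zero]
        exact Submodule.zero_mem _
      -- helper for the case `h = 1`
      have main : ∀ u v : L, u ∈ piece 1 → v ∈ piece (k+1) → br u v ∈ Nm hE (k+2) := by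
        intro u v hu hv
        have h1 : u ∈ Submodule.span F2 (Set.range (Bv hE)) := piece1_le_spanB hE hu
        have h2 : v ∈ Nm hE (k+1) := IH (k+1) (by omega) hv
        have h3 := br_mem_span_pair (br := br) h1 h2
        refine Submodule.span_le.mpr ?_ h3
        rintro _ ⟨s, ⟨j0, rfl⟩, t, ⟨j', rfl⟩, rfl⟩
        refine Submodule.subset_span ⟨Fin.cons j0 j', ?_⟩
        have hc : Bv hE ∘ Fin.cons j0 j' = Fin.cons (Bv hE j0) (Bv hE ∘ j') := by
          funext p
          refine Fin.cases ?_ (fun q => ?_) p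
          · rfl
          · rfl
        rw [hc, nest_cons]
      rcases eq_or_ne h 1 with rfl | h1
      · have hk' : k' = k + 1 := by omega
        subst hk'
        exact main u v hu hv
      rcases eq_or_ne k' 1 with rfl | k1
      · have hh : h = k + 1 := by omega
        subst hh
        rw [br_symm hE]
        exact main v u hv hu
      -- both degrees at least 2
      have hpu : ψ u = 0 := hE.psi_graded h h1 u hu
      have hpv : ψ v = 0 := hE.psi_graded k' k1 v hv
      rw [hE.ker_abelian u v hpu hpv]
      exact Submodule.zero_mem _
    intro x hx
    have hker : ψ x = 0 := hE.psi_graded (k+2) (by omega) x hx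
    have hx1 : x ∈ Submodule.span F2 {z | ∃ a b, z = br a b} := by
      rw [hE.comm_eq_ker]; exact LinearMap.mem_ker.mpr hker
    have hx2 : x ∈ ⨆ d, Rm (br := br) (piece := piece) d := by
      refine Submodule.span_le.mpr ?_ hx1
      rintro z ⟨a, b, rfl⟩
      exact br_mem_iSupR hE a b
    exact hRN (mem_piece_component hE (Rm_le_piece hE) hx hx2)

end ExpProof
section ExpProof2

variable {n : ℕ} {L : Type} [AddCommGroup L] [Module F2 L]
  {br : L →ₗ[F2] L →ₗ[F2] L} {piece : ℕ → Submodule F2 L} {ψ : L →ₗ[F2] V (Fin n)}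

lemma snoc_inj {α : Type} {k : ℕ} {f : Fin k → α} (hf : Function.Injective f) {a : α}
    (ha : ∀ p, f p ≠ a) : Function.Injective (Fin.snoc f a : Fin (k+1) → α) := by
  intro p q h
  induction p using Fin.lastCases with
  | last =>
    induction q using Fin.lastCases with
    | last => rfl
    | cast q' =>
      rw [Fin.snoc_last, Fin.snoc_castSucc] at h
      exact absurd h.symm (ha q')
  | cast p' =>
    induction q using Fin.lastCases with
    | last =>
      rw [Fin.snoc_last, Fin.snoc_castSucc] at h
      exact absurd h (ha p')
    | cast q' =>
      rw [Fin.snoc_castSucc, Fin.snoc_castSucc] at h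
      exact congrArg Fin.castSucc (hf h)

lemma snoc2_at_k {α : Type} {k : ℕ} (f : Fin k → α) (y z : α) :
    (Fin.snoc (Fin.snoc f y) z : Fin (k+2) → α) ⟨k, by omega⟩ = y := by
  have h : (⟨k, by omega⟩ : Fin (k+2)) = Fin.castSucc (Fin.last k) := rfl
  rw [h, Fin.snoc_castSucc, Fin.snoc_last]

lemma snoc2_at_k1 {α : Type} {k : ℕ} (f : Fin k → α) (y z : α) :
    (Fin.snoc (Fin.snoc f y) z : Fin (k+2) → α) ⟨k+1, by omega⟩ = z := by
  have h : (⟨k+1, by omega⟩ : Fin (k+2)) = Fin.last (k+1) := rfl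
  rw [h, Fin.snoc_last]

lemma image_eq_of_inj {k : ℕ} (j : Fin k → Fin n) (hj : Function.Injective j)
    (A : Finset (Fin n)) (h1 : ∀ p, j p ∈ A) (hA : A.card = k) :
    Finset.image j Finset.univ = A := by
  apply Finset.eq_of_subset_of_card_le
  · intro v hv
    rcases Finset.mem_image.mp hv with ⟨p, -, rfl⟩
    exact h1 p
  · rw [Finset.card_image_of_injective _ hj, Finset.card_univ, Fintype.card_fin, hA]

variable (hE : IsExpLie br piece ψ)
include hE

set_option maxHeartbeats 1000000 in
lemma nest_repeat_zero : ∀ (M : ℕ) (σ : Fin M → L), (∀ p, ∃ jp, σ p = Bv hE jp) →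
    ∀ s t : Fin M, (s : ℕ) < (t : ℕ) → σ s = σ t → nest br σ = 0 := by
  intro M
  induction M using Nat.strong_induction_on with
  | _ M IH =>
  match M with
  | 0 => intro σ _ s t hst _; exact absurd s.isLt (by omega)
  | 1 =>
    intro σ _ s t hst _
    have := s.isLt; have := t.isLt; omega
  | 2 =>
    intro σ hσ s t hst heq
    have hsv := s.isLt; have htv := t.isLt
    have hs0 : s = (0 : Fin 2) := Fin.ext (show (s:ℕ) = 0 by omega)
    have ht1 : t = (1 : Fin 2) := Fin.ext (show (t:ℕ) = 1 by omega)
    rw [nest_succ, nest_one]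
    show br (σ 0) (σ 1) = 0
    rw [show σ 0 = σ s by rw [hs0], show σ 1 = σ t by rw [ht1], heq, hE.br_self]
  | 3 =>
    intro σ hσ s t hst heq
    have hmem : ∀ p, σ p ∈ piece 1 := fun p => by
      obtain ⟨jp, hj⟩ := hσ p; rw [hj]; exact Bv_mem hE jp
    have h3 : nest br σ = br (σ 0) (br (σ 1) (σ 2)) := by
      rw [nest_succ, nest_succ, nest_one]; rfl
    have hsv := s.isLt; have htv := t.isLt
    have hcase : ((s:ℕ) = 0 ∧ (t:ℕ) = 1) ∨ ((s:ℕ) = 0 ∧ (t:ℕ) = 2) ∨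
        ((s:ℕ) = 1 ∧ (t:ℕ) = 2) := by omega
    rcases hcase with ⟨h1, h2⟩ | ⟨h1, h2⟩ | ⟨h1, h2⟩
    · have hs : s = (0 : Fin 3) := Fin.ext h1
      have ht : t = (1 : Fin 3) := Fin.ext h2
      obtain ⟨j0, hj0⟩ := hσ s
      have hb := hE.basis_bracket_sq (σ 0) (σ 2) (hmem 0) (hmem 2)
        ⟨j0, by rw [show σ 0 = σ s by rw [hs], hj0]; exact psi_Bv hE j0⟩
      rw [h3, show σ 1 = σ 0 by rw [← hs, ← ht, heq]]
      exact hb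
    · have hs : s = (0 : Fin 3) := Fin.ext h1
      have ht : t = (2 : Fin 3) := Fin.ext h2
      obtain ⟨j0, hj0⟩ := hσ s
      have hb := hE.basis_bracket_sq (σ 0) (σ 1) (hmem 0) (hmem 1)
        ⟨j0, by rw [show σ 0 = σ s by rw [hs], hj0]; exact psi_Bv hE j0⟩
      rw [h3, show σ 2 = σ 0 by rw [← hs, ← ht, heq], br_symm hE (σ 1) (σ 0)]
      exact hb
    · have hs : s = (1 : Fin 3) := Fin.ext h1
      have ht : t = (2 : Fin 3) := Fin.ext h2
      rw [h3, show σ 1 = σ 2 by rw [← hs, ← ht, heq], hE.br_self, map_zero]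
  | (m+4) =>
    intro σ hσ s t hst heq
    have hmem : ∀ p, σ p ∈ piece 1 := fun p => by
      obtain ⟨jp, hj⟩ := hσ p; rw [hj]; exact Bv_mem hE jp
    have key : ∀ (σ' : Fin (m+4) → L), (∀ p, ∃ jp, σ' p = Bv hE jp) →
        ∀ s' t' : Fin (m+4), 1 ≤ (s':ℕ) → (s':ℕ) < (t':ℕ) → σ' s' = σ' t' →
        nest br σ' = 0 := by
      intro σ' hσ' s' t' hs1 hst' heq'
      have ht' := t'.isLt
      rw [nest_succ]
      have h0 : nest br (Fin.tail σ') = 0 := by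
        have e1 : Fin.succ (⟨(s':ℕ) - 1, by omega⟩ : Fin (m+3)) = s' :=
          Fin.ext (by simp [Fin.val_succ]; omega)
        have e2 : Fin.succ (⟨(t':ℕ) - 1, by omega⟩ : Fin (m+3)) = t' :=
          Fin.ext (by simp [Fin.val_succ]; omega)
        refine IH (m+3) (by omega) (Fin.tail σ') (fun p => hσ' p.succ)
          ⟨(s':ℕ) - 1, by omega⟩ ⟨(t':ℕ) - 1, by omega⟩ (by show (s':ℕ) - 1 < (t':ℕ) - 1; omega) ?_
        show σ' (Fin.succ ⟨(s':ℕ) - 1, by omega⟩) = σ' (Fin.succ ⟨(t':ℕ) - 1, by omega⟩)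
        exact (congrArg σ' e1).trans (heq'.trans (congrArg σ' e2).symm)
      rw [h0, map_zero]
    rcases Nat.eq_zero_or_pos (s:ℕ) with hs0 | hs1
    · rcases lt_or_ge (t:ℕ) (m+2) with htlt | htge
      · exact hE.repeat_vanish m σ hmem
          ⟨s, t, fun h => absurd hst (by rw [h]; omega), by omega, htlt, heq⟩
      · have ht' := t.isLt
        have hfix : ∀ p : Fin (m+4), m+2 ≤ (p:ℕ) →
            Equiv.swap s (⟨m+1, by omega⟩ : Fin (m+4)) p = p := by
          intro p hp
          apply Equiv.swap_apply_of_ne_of_ne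
          · intro hps; rw [hps] at hp; omega
          · intro hpa
            have : (p:ℕ) = m+1 := by rw [hpa]
            omega
        have hperm := hE.perm_invariant m σ hmem
          (Equiv.swap s (⟨m+1, by omega⟩ : Fin (m+4))) hfix
        have h1 : nest br (σ ∘ Equiv.swap s (⟨m+1, by omega⟩ : Fin (m+4))) = 0 := by
          refine key _ (fun p => hσ _) (⟨m+1, by omega⟩ : Fin (m+4)) t
            (by show 1 ≤ m+1; omega) (by show m+1 < (t:ℕ); omega) ?_
          show σ (Equiv.swap s _ ⟨m+1, by omega⟩) = σ (Equiv.swap s _ t)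
          rw [Equiv.swap_apply_right, hfix t htge]
          exact heq
        rw [← hperm]
        exact h1
    · exact key σ hσ s t hs1 hst heq

lemma nest_eq_of_agree (k : ℕ) (j j' : Fin (k+2) → Fin n) (hj : Function.Injective j)
    (hj' : Function.Injective j') (A : Finset (Fin n)) (h1 : ∀ p, j p ∈ A)
    (h2 : ∀ p, j' p ∈ A) (hA : A.card = k + 2)
    (hlast : ∀ p : Fin (k+2), k ≤ (p:ℕ) → j p = j' p) :
    nest br (Bv hE ∘ j) = nest br (Bv hE ∘ j') := by
  rcases k with _ | _ | k
  · have hjj : j = j' := funext fun p => hlast p (Nat.zero_le _)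
    rw [hjj]
  · have himg := image_eq_of_inj j hj A h1 hA
    have hmem : j' 0 ∈ Finset.image j Finset.univ := by rw [himg]; exact h2 0
    rcases Finset.mem_image.mp hmem with ⟨q, -, hq⟩
    have hq0 : q = 0 := by
      by_contra hq0
      have hv : 1 ≤ (q:ℕ) := by
        rcases Nat.eq_zero_or_pos (q:ℕ) with h | h
        · exact absurd (Fin.ext h) hq0
        · exact h
      have := hlast q (by omega)
      rw [this] at hq
      exact hq0 (hj' hq)
    rw [hq0] at hq
    have hjj : j = j' := funext fun p => by
      rcases Nat.eq_zero_or_pos (p:ℕ) with h | h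
      · rw [show p = 0 from Fin.ext h]; exact hq
      · exact hlast p (by omega)
    rw [hjj]
  · have himg := image_eq_of_inj j hj A h1 hA
    have himg' := image_eq_of_inj j' hj' A h2 hA
    have hrange : Set.range j' = Set.range j := by
      rw [← Set.image_univ, ← Set.image_univ, ← Finset.coe_univ, ← Finset.coe_image,
        ← Finset.coe_image, himg, himg']
    let e : Fin (k+4) ≃ Fin (k+4) :=
      (Equiv.ofInjective j' hj').trans ((Equiv.setCongr hrange).trans
        (Equiv.ofInjective j hj).symm)
    have he : ∀ p, j (e p) = j' p := by
      intro p
      show j ((Equiv.ofInjective j hj).symm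
        (Equiv.setCongr hrange ((Equiv.ofInjective j' hj') p))) = j' p
      rw [Equiv.apply_ofInjective_symm hj]
      rfl
    have hfix : ∀ p : Fin (k+4), k+2 ≤ (p:ℕ) → e p = p := fun p hp =>
      hj (by rw [he p, ← hlast p (by omega)])
    have hperm := hE.perm_invariant k (Bv hE ∘ j) (fun p => Bv_mem hE _) e hfix
    have hcomp : (Bv hE ∘ j) ∘ e = Bv hE ∘ j' := funext fun p => congrArg (Bv hE) (he p)
    rw [← hperm, hcomp]

end ExpProof2
section ExpProof3

variable {n : ℕ} {L : Type} [AddCommGroup L] [Module F2 L]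
  {br : L →ₗ[F2] L →ₗ[F2] L} {piece : ℕ → Submodule F2 L} {ψ : L →ₗ[F2] V (Fin n)}

/-- The increasing enumeration of a finite set of indices. -/
noncomputable def sEnum (s : Finset (Fin n)) : Fin s.card → Fin n :=
  fun p => (s.orderIsoOfFin rfl p : Fin n)

lemma sEnum_mem (s : Finset (Fin n)) (p : Fin s.card) : sEnum s p ∈ s :=
  (s.orderIsoOfFin rfl p).2

lemma sEnum_inj (s : Finset (Fin n)) : Function.Injective (sEnum s) :=
  fun p q h => (s.orderIsoOfFin rfl).injective (Subtype.ext h)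

/-- The canonical nested bracket associated to a set `A` and a final pair `(y, z)`. -/
noncomputable def Wv (hE : IsExpLie br piece ψ) (A : Finset (Fin n)) (y z : Fin n) : L :=
  nestC br (Bv hE ∘ sEnum ((A.erase y).erase z)) (br (Bv hE y) (Bv hE z))

variable (hE : IsExpLie br piece ψ)
include hE

lemma W_eq (k : ℕ) (j : Fin (k+2) → Fin n) (hj : Function.Injective j) (A : Finset (Fin n))
    (hjA : ∀ p, j p ∈ A) (hA : A.card = k+2) :
    nest br (Bv hE ∘ j) = Wv hE A (j ⟨k, by omega⟩) (j ⟨k+1, by omega⟩) := by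
  have hyz : j ⟨k, by omega⟩ ≠ j ⟨k+1, by omega⟩ := fun h => by
    have h2 : ((⟨k, by omega⟩ : Fin (k+2)) : ℕ) = ((⟨k+1, by omega⟩ : Fin (k+2)) : ℕ) :=
      congrArg Fin.val (hj h)
    simp at h2
  have hyA : j ⟨k, by omega⟩ ∈ A := hjA _
  have hzA : j ⟨k+1, by omega⟩ ∈ A := hjA _
  have hzy : j ⟨k+1, by omega⟩ ∈ A.erase (j ⟨k, by omega⟩) :=
    Finset.mem_erase.mpr ⟨Ne.symm hyz, hzA⟩
  have hs : ((A.erase (j ⟨k, by omega⟩)).erase (j ⟨k+1, by omega⟩)).card = k := by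
    rw [Finset.card_erase_of_mem hzy, Finset.card_erase_of_mem hyA, hA]
    omega
  set S := (A.erase (j ⟨k, by omega⟩)).erase (j ⟨k+1, by omega⟩) with hSdef
  set cs : Fin k → Fin n := sEnum S ∘ Fin.cast hs.symm with hcs
  have hcs_inj : Function.Injective cs := (sEnum_inj S).comp (Fin.cast_injective _)
  have hcs_memS : ∀ p, cs p ∈ S := fun p => sEnum_mem S _
  have hcs_memA : ∀ p, cs p ∈ A := fun p =>
    Finset.mem_of_mem_erase (Finset.mem_of_mem_erase (hcs_memS p))
  have hyS : j ⟨k, by omega⟩ ∉ S := fun h =>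
    Finset.notMem_erase _ A ((Finset.erase_subset _ _) h)
  have hzS : j ⟨k+1, by omega⟩ ∉ S := Finset.notMem_erase _ _
  have hy_ne : ∀ p, cs p ≠ j ⟨k, by omega⟩ := fun p h => hyS (h ▸ hcs_memS p)
  have hz_ne : ∀ p : Fin (k+1),
      (Fin.snoc cs (j ⟨k, by omega⟩) : Fin (k+1) → Fin n) p ≠ j ⟨k+1, by omega⟩ := by
    intro p
    induction p using Fin.lastCases with
    | last => rw [Fin.snoc_last]; exact hyz
    | cast q => rw [Fin.snoc_castSucc]; exact fun h => hzS (h ▸ hcs_memS q)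
  have hj'inj : Function.Injective
      (Fin.snoc (Fin.snoc cs (j ⟨k, by omega⟩)) (j ⟨k+1, by omega⟩) : Fin (k+2) → Fin n) :=
    snoc_inj (snoc_inj hcs_inj hy_ne) hz_ne
  have hj'A : ∀ p, (Fin.snoc (Fin.snoc cs (j ⟨k, by omega⟩)) (j ⟨k+1, by omega⟩) :
      Fin (k+2) → Fin n) p ∈ A := by
    intro p
    induction p using Fin.lastCases with
    | last => rw [Fin.snoc_last]; exact hzA
    | cast q =>
      rw [Fin.snoc_castSucc]
      induction q using Fin.lastCases with
      | last => rw [Fin.snoc_last]; exact hyA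
      | cast r => rw [Fin.snoc_castSucc]; exact hcs_memA r
  have hlast : ∀ p : Fin (k+2), k ≤ (p:ℕ) → j p =
      (Fin.snoc (Fin.snoc cs (j ⟨k, by omega⟩)) (j ⟨k+1, by omega⟩) : Fin (k+2) → Fin n) p := by
    intro p hp
    have hpv := p.isLt
    rcases eq_or_ne ((p:ℕ)) k with hk | hk
    · have hpk : p = ⟨k, by omega⟩ := Fin.ext hk
      rw [hpk, snoc2_at_k]
    · have hpk : p = ⟨k+1, by omega⟩ := Fin.ext (show (p:ℕ) = k+1 by omega)
      rw [hpk, snoc2_at_k1]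
  have hagree := nest_eq_of_agree hE k j _ hj hj'inj A hjA hj'A hA hlast
  rw [hagree]
  rw [show Bv hE ∘ (Fin.snoc (Fin.snoc cs (j ⟨k, by omega⟩)) (j ⟨k+1, by omega⟩) :
        Fin (k+2) → Fin n)
      = Fin.snoc (Fin.snoc (Bv hE ∘ cs) (Bv hE (j ⟨k, by omega⟩)))
          (Bv hE (j ⟨k+1, by omega⟩)) by
    rw [← Fin.comp_snoc, ← Fin.comp_snoc]]
  rw [nest_snoc2]
  show nestC br ((Bv hE ∘ sEnum S) ∘ Fin.cast hs.symm) _ = _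
  rw [nestC_cast]
  rfl

omit hE in
lemma W_card (A : Finset (Fin n)) (y z : Fin n) (hyA : y ∈ A) (hzA : z ∈ A) (hyz : y ≠ z) :
    A.card = ((A.erase y).erase z).card + 2 := by
  have hzy : z ∈ A.erase y := Finset.mem_erase.mpr ⟨Ne.symm hyz, hzA⟩
  have c1 := Finset.card_erase_add_one hyA
  have c2 := Finset.card_erase_add_one hzy
  omega

lemma W_sym (A : Finset (Fin n)) (y z : Fin n) (hyA : y ∈ A) (hzA : z ∈ A) (hyz : y ≠ z) :
    Wv hE A y z = Wv hE A z y := by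
  set S := (A.erase y).erase z with hSdef
  have hA2 : A.card = S.card + 2 := W_card A y z hyA hzA hyz
  have hyS : y ∉ S := fun h => Finset.notMem_erase _ A ((Finset.erase_subset _ _) h)
  have hzS : z ∉ S := Finset.notMem_erase _ _
  have hmemS : ∀ p, sEnum S p ∈ S := fun p => sEnum_mem S p
  have hmemA : ∀ p, sEnum S p ∈ A := fun p =>
    Finset.mem_of_mem_erase (Finset.mem_of_mem_erase (hmemS p))
  have hy_ne : ∀ p, sEnum S p ≠ y := fun p h => hyS (h ▸ hmemS p)
  have hz_ne : ∀ p, sEnum S p ≠ z := fun p h => hzS (h ▸ hmemS p)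
  -- the tuple ending with (z, y)
  have hz_ne' : ∀ p : Fin (S.card+1),
      (Fin.snoc (sEnum S) z : Fin (S.card+1) → Fin n) p ≠ y := by
    intro p
    induction p using Fin.lastCases with
    | last => rw [Fin.snoc_last]; exact Ne.symm hyz
    | cast q => rw [Fin.snoc_castSucc]; exact hy_ne q
  have hjinj : Function.Injective
      (Fin.snoc (Fin.snoc (sEnum S) z) y : Fin (S.card+2) → Fin n) :=
    snoc_inj (snoc_inj (sEnum_inj S) hz_ne) hz_ne'
  have hjA : ∀ p, (Fin.snoc (Fin.snoc (sEnum S) z) y : Fin (S.card+2) → Fin n) p ∈ A := by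
    intro p
    induction p using Fin.lastCases with
    | last => rw [Fin.snoc_last]; exact hyA
    | cast q =>
      rw [Fin.snoc_castSucc]
      induction q using Fin.lastCases with
      | last => rw [Fin.snoc_last]; exact hzA
      | cast r => rw [Fin.snoc_castSucc]; exact hmemA r
  have h2 := W_eq hE S.card (Fin.snoc (Fin.snoc (sEnum S) z) y) hjinj A hjA hA2
  rw [snoc2_at_k, snoc2_at_k1] at h2
  have h3 : Bv hE ∘ (Fin.snoc (Fin.snoc (sEnum S) z) y : Fin (S.card+2) → Fin n)
      = Fin.snoc (Fin.snoc (Bv hE ∘ sEnum S) (Bv hE z)) (Bv hE y) := by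
    rw [← Fin.comp_snoc, ← Fin.comp_snoc]
  rw [h3, nest_snoc2] at h2
  rw [← h2, br_symm hE (Bv hE z) (Bv hE y)]
  rfl

lemma W_jacobi (A : Finset (Fin n)) (x y z : Fin n) (hxA : x ∈ A) (hyA : y ∈ A) (hzA : z ∈ A)
    (hxy : x ≠ y) (hxz : x ≠ z) (hyz : y ≠ z) :
    Wv hE A y z = Wv hE A x z + Wv hE A x y := by
  set S := ((A.erase x).erase y).erase z with hSdef
  have hyx : y ∈ A.erase x := Finset.mem_erase.mpr ⟨Ne.symm hxy, hyA⟩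
  have hzxy : z ∈ (A.erase x).erase y :=
    Finset.mem_erase.mpr ⟨Ne.symm hyz, Finset.mem_erase.mpr ⟨Ne.symm hxz, hzA⟩⟩
  have hA3 : A.card = S.card + 3 := by
    have c1 := Finset.card_erase_add_one hxA
    have c2 := Finset.card_erase_add_one hyx
    have c3 := Finset.card_erase_add_one hzxy
    rw [← hSdef] at c3
    omega
  have hxS : x ∉ S := fun h => Finset.notMem_erase _ A
    ((Finset.erase_subset _ _) ((Finset.erase_subset _ _) h))
  have hyS : y ∉ S := fun h => Finset.notMem_erase _ (A.erase x) ((Finset.erase_subset _ _) h)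
  have hzS : z ∉ S := Finset.notMem_erase _ _
  have hmemS : ∀ p, sEnum S p ∈ S := fun p => sEnum_mem S p
  have hmemA : ∀ p, sEnum S p ∈ A := fun p => Finset.mem_of_mem_erase
    (Finset.mem_of_mem_erase (Finset.mem_of_mem_erase (hmemS p)))
  have key : ∀ a b c : Fin n, a ∈ A → b ∈ A → c ∈ A → a ∉ S → b ∉ S → c ∉ S →
      a ≠ b → a ≠ c → b ≠ c →
      Wv hE A b c = nestC br (Bv hE ∘ sEnum S) (br (Bv hE a) (br (Bv hE b) (Bv hE c))) := by
    intro a b c haA hbA hcA haS hbS hcS hab hac hbc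
    have ha_ne : ∀ p, sEnum S p ≠ a := fun p h => haS (h ▸ hmemS p)
    have hb_ne : ∀ p : Fin (S.card+1),
        (Fin.snoc (sEnum S) a : Fin (S.card+1) → Fin n) p ≠ b := by
      intro p
      induction p using Fin.lastCases with
      | last => rw [Fin.snoc_last]; exact hab
      | cast q => rw [Fin.snoc_castSucc]; exact fun h => hbS (h ▸ hmemS q)
    have hc_ne : ∀ p : Fin (S.card+2),
        (Fin.snoc (Fin.snoc (sEnum S) a) b : Fin (S.card+2) → Fin n) p ≠ c := by
      intro p
      induction p using Fin.lastCases with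
      | last => rw [Fin.snoc_last]; exact hbc
      | cast q =>
        rw [Fin.snoc_castSucc]
        induction q using Fin.lastCases with
        | last => rw [Fin.snoc_last]; exact hac
        | cast r => rw [Fin.snoc_castSucc]; exact fun h => hcS (h ▸ hmemS r)
    have hjinj : Function.Injective
        (Fin.snoc (Fin.snoc (Fin.snoc (sEnum S) a) b) c : Fin (S.card+3) → Fin n) :=
      snoc_inj (snoc_inj (snoc_inj (sEnum_inj S) ha_ne) hb_ne) hc_ne
    have hjA : ∀ p, (Fin.snoc (Fin.snoc (Fin.snoc (sEnum S) a) b) c :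
        Fin (S.card+3) → Fin n) p ∈ A := by
      intro p
      induction p using Fin.lastCases with
      | last => rw [Fin.snoc_last]; exact hcA
      | cast q =>
        rw [Fin.snoc_castSucc]
        induction q using Fin.lastCases with
        | last => rw [Fin.snoc_last]; exact hbA
        | cast r =>
          rw [Fin.snoc_castSucc]
          induction r using Fin.lastCases with
          | last => rw [Fin.snoc_last]; exact haA
          | cast u => rw [Fin.snoc_castSucc]; exact hmemA u
    have h1 := W_eq hE (S.card+1)
      (Fin.snoc (Fin.snoc (Fin.snoc (sEnum S) a) b) c) hjinj A hjA hA3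
    rw [snoc2_at_k, snoc2_at_k1] at h1
    have h2 : Bv hE ∘ (Fin.snoc (Fin.snoc (Fin.snoc (sEnum S) a) b) c :
        Fin (S.card+3) → Fin n)
        = Fin.snoc (Fin.snoc (Fin.snoc (Bv hE ∘ sEnum S) (Bv hE a)) (Bv hE b)) (Bv hE c) := by
      rw [← Fin.comp_snoc, ← Fin.comp_snoc, ← Fin.comp_snoc]
    rw [h2, nest_snoc3] at h1
    exact h1.symm
  have h1 := key x y z hxA hyA hzA hxS hyS hzS hxy hxz hyz
  have h2 := key y x z hyA hxA hzA hyS hxS hzS (Ne.symm hxy) hyz hxz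
  have h3 := key z x y hzA hxA hyA hzS hxS hyS (Ne.symm hxz) (Ne.symm hyz) hxy
  rw [h1, h2, h3, ← nestC_add, ← jacobi' hE]

end ExpProof3
section ExpProof4

lemma sum_mul_choose_eq (n : ℕ) (hn : 1 ≤ n) :
    ∑ m ∈ Finset.range (n+1), n.choose m * m = n * 2^(n-1) := by
  have hrefl := Finset.sum_range_reflect (fun m => n.choose m * m) (n+1)
  have h1 : ∑ j ∈ Finset.range (n+1), n.choose (n - j) * (n - j)
      = ∑ m ∈ Finset.range (n+1), n.choose m * m := by
    rw [← hrefl]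
    refine Finset.sum_congr rfl fun j hj => ?_
    have hj' : n + 1 - 1 - j = n - j := by omega
    rw [hj']
  have h3 : ∑ j ∈ Finset.range (n+1), (n.choose (n - j) * (n - j) + n.choose j * j)
      = ∑ j ∈ Finset.range (n+1), n.choose j * n := by
    refine Finset.sum_congr rfl fun j hj => ?_
    have hjn : j ≤ n := Nat.lt_succ_iff.mp (Finset.mem_range.mp hj)
    rw [Nat.choose_symm hjn, ← Nat.mul_add]
    congr 1
    omega
  have h3' : ∑ j ∈ Finset.range (n+1), (n.choose (n - j) * (n - j) + n.choose j * j)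
      = (∑ j ∈ Finset.range (n+1), n.choose (n - j) * (n - j))
        + ∑ j ∈ Finset.range (n+1), n.choose j * j := Finset.sum_add_distrib
  have h4 : ∑ j ∈ Finset.range (n+1), n.choose j * n = 2^n * n := by
    rw [← Finset.sum_mul, Nat.sum_range_choose]
  have h5 : (2:ℕ)^n = 2 * 2^(n-1) := by
    conv_lhs => rw [show n = n - 1 + 1 by omega]
    rw [pow_succ, Nat.mul_comm]
  have h6 : (2:ℕ)^n * n = 2 * (n * 2^(n-1)) := by rw [h5]; ring
  omega

lemma count_sum_eq (n : ℕ) (hn : 1 ≤ n) :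
    (∑ m ∈ Finset.range (n+1), n.choose m * (m-1)) + 2^n = n * 2^(n-1) + 1 := by
  have h1 : ∀ m : ℕ, n.choose m * (m-1) + n.choose m
      = n.choose m * m + (if m = 0 then 1 else 0) := by
    intro m
    rcases m with _ | m
    · simp
    · simp [Nat.mul_succ]
  have hA : (∑ m ∈ Finset.range (n+1), n.choose m * (m-1))
      + (∑ m ∈ Finset.range (n+1), n.choose m)
      = (∑ m ∈ Finset.range (n+1), n.choose m * m) + 1 := by
    rw [← Finset.sum_add_distrib]
    rw [Finset.sum_congr rfl (fun m _ => h1 m), Finset.sum_add_distrib]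
    congr 1
    rw [Finset.sum_ite_eq' (Finset.range (n+1)) 0 (fun _ => 1)]
    rw [if_pos (Finset.mem_range.mpr (by omega))]
  have hB := Nat.sum_range_choose n
  have hC := sum_mul_choose_eq n hn
  omega

variable {n : ℕ} {L : Type} [AddCommGroup L] [Module F2 L]
  {br : L →ₗ[F2] L →ₗ[F2] L} {piece : ℕ → Submodule F2 L} {ψ : L →ₗ[F2] V (Fin n)}

open Classical in
/-- The global finite spanning set. -/
noncomputable def genFinset (hE : IsExpLie br piece ψ) : Finset L :=
  (Finset.univ.image (Bv hE)) ∪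
    Finset.univ.biUnion (fun A : Finset (Fin n) =>
      if h2 : 2 ≤ A.card then
        (A.erase (A.min' (Finset.card_pos.mp (by omega)))).image
          (fun y => Wv hE A (A.min' (Finset.card_pos.mp (by omega))) y)
      else ∅)

variable (hE : IsExpLie br piece ψ)
include hE

lemma nest_noninj_zero (m : ℕ) (j : Fin m → Fin n) (hnotinj : ¬ Function.Injective j) :
    nest br (Bv hE ∘ j) = 0 := by
  obtain ⟨s, t, heq, hne⟩ := Function.not_injective_iff.mp hnotinj
  have hval : (s:ℕ) ≠ (t:ℕ) := fun h => hne (Fin.ext h)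
  rcases Nat.lt_or_ge (s:ℕ) (t:ℕ) with h | h
  · exact nest_repeat_zero hE m (Bv hE ∘ j) (fun p => ⟨j p, rfl⟩) s t h
      (congrArg (Bv hE) heq)
  · exact nest_repeat_zero hE m (Bv hE ∘ j) (fun p => ⟨j p, rfl⟩) t s (by omega)
      (congrArg (Bv hE) heq.symm)

lemma genFinset_card : (genFinset hE).card
    ≤ n + ∑ m ∈ Finset.range (n+1), n.choose m * (m-1) := by
  classical
  refine le_trans (Finset.card_union_le _ _) ?_
  have h1 : (Finset.univ.image (Bv hE)).card ≤ n :=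
    le_trans Finset.card_image_le (le_of_eq (by simp))
  have h2 : (Finset.univ.biUnion (fun A : Finset (Fin n) =>
      if h2 : 2 ≤ A.card then
        (A.erase (A.min' (Finset.card_pos.mp (by omega)))).image
          (fun y => Wv hE A (A.min' (Finset.card_pos.mp (by omega))) y)
      else ∅)).card ≤ ∑ A : Finset (Fin n), (A.card - 1) := by
    refine le_trans (Finset.card_biUnion_le) (Finset.sum_le_sum fun A _ => ?_)
    by_cases hA : 2 ≤ A.card
    · rw [dif_pos hA]
      refine le_trans Finset.card_image_le (le_of_eq ?_)
      rw [Finset.card_erase_of_mem (Finset.min'_mem _ _)]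
    · rw [dif_neg hA]
      simp
  have h3 : ∑ A : Finset (Fin n), (A.card - 1)
      = ∑ m ∈ Finset.range (n+1), n.choose m * (m-1) := by
    rw [show (Finset.univ : Finset (Finset (Fin n)))
        = (Finset.univ : Finset (Fin n)).powerset from Finset.powerset_univ.symm]
    rw [Finset.sum_powerset_apply_card (fun c => c - 1)]
    simp [Finset.card_univ, smul_eq_mul]
  rw [h3] at h2
  exact add_le_add h1 h2

lemma genFinset_span : Submodule.span F2 ((genFinset hE : Finset L) : Set L) = ⊤ := by
  classical
  have hNle : ∀ m, Nm hE m ≤ Submodule.span F2 ((genFinset hE : Finset L) : Set L) := by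
    intro m
    refine Submodule.span_le.mpr ?_
    rintro v ⟨j, rfl⟩
    rcases m with _ | _ | k
    · show nest br (Bv hE ∘ j) ∈ _
      show (0 : L) ∈ _
      exact Submodule.zero_mem _
    · refine Submodule.subset_span ?_
      show Bv hE (j 0) ∈ ((genFinset hE : Finset L) : Set L)
      refine Finset.mem_coe.mpr (Finset.mem_union_left _ ?_)
      exact Finset.mem_image.mpr ⟨j 0, Finset.mem_univ _, rfl⟩
    · by_cases hinj : Function.Injective j
      · have hAcard : (Finset.image j Finset.univ).card = k + 2 := by
          rw [Finset.card_image_of_injective _ hinj]; simp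
        have hjA : ∀ p, j p ∈ Finset.image j Finset.univ :=
          fun p => Finset.mem_image_of_mem j (Finset.mem_univ p)
        set A := Finset.image j Finset.univ with hAdef
        have h2A : 2 ≤ A.card := by omega
        have hne : A.Nonempty := Finset.card_pos.mp (by omega)
        have haA : A.min' hne ∈ A := A.min'_mem hne
        rw [W_eq hE k j hinj A hjA hAcard]
        have hyA : j ⟨k, by omega⟩ ∈ A := hjA _
        have hzA : j ⟨k+1, by omega⟩ ∈ A := hjA _
        have hyz : j ⟨k, by omega⟩ ≠ j ⟨k+1, by omega⟩ := fun h => by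
          have h2 : ((⟨k, by omega⟩ : Fin (k+2)) : ℕ) = ((⟨k+1, by omega⟩ : Fin (k+2)) : ℕ) :=
            congrArg Fin.val (hinj h)
          simp at h2
        have hgen : ∀ w ∈ A.erase (A.min' hne),
            Wv hE A (A.min' hne) w ∈ Submodule.span F2 ((genFinset hE : Finset L) : Set L) := by
          intro w hw
          refine Submodule.subset_span (Finset.mem_coe.mpr (Finset.mem_union_right _ ?_))
          refine Finset.mem_biUnion.mpr ⟨A, Finset.mem_univ _, ?_⟩
          rw [dif_pos h2A]
          exact Finset.mem_image.mpr ⟨w, hw, rfl⟩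
        by_cases hya : j ⟨k, by omega⟩ = A.min' hne
        · rw [hya]
          exact hgen _ (Finset.mem_erase.mpr ⟨fun h => hyz (hya.trans h.symm), hzA⟩)
        · by_cases hza : j ⟨k+1, by omega⟩ = A.min' hne
          · rw [W_sym hE A (j ⟨k, by omega⟩) (j ⟨k+1, by omega⟩) hyA hzA hyz, hza]
            exact hgen _ (Finset.mem_erase.mpr ⟨hya, hyA⟩)
          · rw [W_jacobi hE A (A.min' hne) _ _ haA hyA hzA
              (fun h => hya h.symm) (fun h => hza h.symm) hyz]
            exact add_mem (hgen _ (Finset.mem_erase.mpr ⟨hza, hzA⟩))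
              (hgen _ (Finset.mem_erase.mpr ⟨hya, hyA⟩))
      · rw [nest_noninj_zero hE (k+2) j hinj]
        exact Submodule.zero_mem _
  rw [eq_top_iff]
  refine le_trans (le_of_eq hE.span_top.symm) (iSup_le fun m => ?_)
  exact le_trans (piece_le_Nm hE m) (hNle m)

end ExpProof4
/-- Every `n`-expansion Lie algebra is finite dimensional, of dimension at most
`n·2^{n−1} − 2^n + n + 1` (stated without ℕ-truncation as
`dim L + 2^n ≤ n·2^{n−1} + n + 1`), and its graded pieces vanish in degrees `m > n`. -/
theorem statement8 (n : ℕ) (hn : 1 ≤ n) (E : ExpLieAlg (Fin n)) :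
    FiniteDimensional F2 E.L ∧
    Module.finrank F2 E.L + 2 ^ n ≤ n * 2 ^ (n - 1) + n + 1 ∧
    (∀ m : ℕ, n < m → E.piece m = ⊥) := by
  classical
  have hE : IsExpLie E.br E.piece E.psi := E.isexp
  have hspan := genFinset_span hE
  have hfin : FiniteDimensional F2 E.L := Module.finite_def.mpr ⟨genFinset hE, hspan⟩
  refine ⟨hfin, ?_, ?_⟩
  · have hrank : Module.finrank F2 E.L ≤ (genFinset hE).card := by
      rw [← finrank_top F2 E.L, ← hspan]
      exact finrank_span_finset_le_card _
    have hcard := genFinset_card hE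
    have hsum := count_sum_eq n hn
    omega
  · intro m hm
    refine le_bot_iff.mp (le_trans (piece_le_Nm hE m) (Submodule.span_le.mpr ?_))
    rintro v ⟨j, rfl⟩
    have hnotinj : ¬ Function.Injective j := fun hinj => by
      have h1 := Fintype.card_le_of_injective j hinj
      rw [Fintype.card_fin, Fintype.card_fin] at h1
      omega
    rw [nest_noninj_zero hE m j hnotinj]
    exact Submodule.zero_mem _

end HigherGenus
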